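/- In a chores-only lexicographic instance, a complete allocation is Pareto optimal if and only if it is sequencible. -/

import Mathlib

attribute [local instance 10] Classical.propDecidable

/-- A lexicographic mixed instance: each agent `i` has a set `G i` of goods
(its complement being the chores `C i`) and a strict linear importance order
`⊳_i` on the items, encoded as a linear order where larger means more important. -/
structure LexInstance (N M : Type) [Fintype N] [Fintype M] [DecidableEq M] where
  G : N → Finset M
  ord : N → LinearOrder M

namespace LexInstance

variable {N M : Type} [Fintype N] [Fintype M] [DecidableEq M]

/-- `inst.imp i a b` means `a ⊳_i b` : `a` is more important than `b` for agent `i`. -/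
def imp (inst : LexInstance N M) (i : N) (a b : M) : Prop := (inst.ord i).lt b a

/-- The chores of agent `i`. -/
def C (inst : LexInstance N M) (i : N) : Finset M := (inst.G i)ᶜ

/-- Strict lexicographic preference `X ≻_i Y`. -/
def SPref (inst : LexInstance N M) (i : N) (X Y : Finset M) : Prop :=
  (∃ g ∈ inst.G i ∩ (X \ Y), ∀ o ∈ Y ∩ inst.G i, inst.imp i o g → o ∈ X) ∨
  (∃ c ∈ inst.C i ∩ (Y \ X), ∀ o ∈ X ∩ inst.C i, inst.imp i o c → o ∈ Y)

/-- Weak lexicographic preference `X ⪰_i Y`. -/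
def WPref (inst : LexInstance N M) (i : N) (X Y : Finset M) : Prop :=
  inst.SPref i X Y ∨ X = Y

/-- A (complete) allocation: pairwise disjoint bundles whose union is all of `M`. -/
def IsAllocation (_inst : LexInstance N M) (A : N → Finset M) : Prop :=
  (∀ i j, i ≠ j → Disjoint (A i) (A j)) ∧ ∀ o : M, ∃ i, o ∈ A i

/-- Pareto optimality of a (complete) allocation. -/
def ParetoOptimal (inst : LexInstance N M) (A : N → Finset M) : Prop :=
  ¬ ∃ B : N → Finset M, inst.IsAllocation B ∧
      (∀ i, inst.WPref i (B i) (A i)) ∧ ∃ h, inst.SPref h (B h) (A h)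

/-- The item agent `i` picks from the remaining set `R`: its `⊳_i`-greatest
remaining good if there is one, and otherwise the `⊳_i`-least remaining item. -/
noncomputable def pickOne (inst : LexInstance N M) (i : N) (R : Finset M)
    (h : R.Nonempty) : M :=
  if hg : (R ∩ inst.G i).Nonempty then @Finset.max' M (inst.ord i) (R ∩ inst.G i) hg
  else @Finset.min' M (inst.ord i) R h

/-- Run the picking procedure along a sequence of agents, starting from the
remaining items `R`; returns the resulting bundles. -/
noncomputable def runPick (inst : LexInstance N M) : List N → Finset M → N → Finset M
  | [], _ => fun _ => ∅
  | i :: rest, R =>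
    if h : R.Nonempty then
      fun j =>
        runPick inst rest (R.erase (inst.pickOne i R h)) j ∪
          (if j = i then {inst.pickOne i R h} else ∅)
    else fun _ => ∅

/-- An allocation is sequencible if it is produced by some picking sequence of
length `|M|` starting from all items. -/
def Sequencible (inst : LexInstance N M) (A : N → Finset M) : Prop :=
  ∃ s : List N, s.length = Fintype.card M ∧ inst.runPick s Finset.univ = A

/-- A chores-only instance: every item is a chore for every agent. -/
def ChoresOnly (inst : LexInstance N M) : Prop := ∀ i, inst.G i = ∅

/-- Envy-freeness up to any item. -/
def EFX (inst : LexInstance N M) (A : N → Finset M) : Prop :=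
  ∀ i h : N,
    (∀ o ∈ A h ∩ inst.G i, inst.WPref i (A i) ((A h).erase o)) ∧
    (∀ o ∈ A i ∩ inst.C i, inst.WPref i ((A i).erase o) (A h))

/-- Envy-freeness up to any chore. -/
def EFXc (inst : LexInstance N M) (A : N → Finset M) : Prop :=
  ∀ i h : N, ∀ o ∈ A i ∩ inst.C i, inst.WPref i ((A i).erase o) (A h)

/-- Envy-freeness up to one item. -/
def EF1 (inst : LexInstance N M) (A : N → Finset M) : Prop :=
  ∀ i h : N, ((A i ∩ inst.C i) ∪ (A h ∩ inst.G i)).Nonempty →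
    ∃ o ∈ (A i ∩ inst.C i) ∪ (A h ∩ inst.G i),
      inst.WPref i (A i) ((A h).erase o) ∨ inst.WPref i ((A i).erase o) (A h)

/-- `A` gives every agent at least its maximin share: for every partition `P`
of the items into `n` bundles, agent `i` weakly prefers `A i` to some bundle of
`P` (hence to the `⪰_i`-least bundle of `P`). -/
def MMSfair (inst : LexInstance N M) (A : N → Finset M) : Prop :=
  ∀ i, ∀ P : N → Finset M, inst.IsAllocation P → ∃ j, inst.WPref i (A i) (P j)

/-- `B` is the maximin share `MMS_i` of agent `i`: `B` is the `⪰_i`-least bundle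
of some partition of `M` into `n` bundles, and every such partition contains a
bundle to which `B` is weakly preferred. -/
def IsMMSBundle (inst : LexInstance N M) (i : N) (B : Finset M) : Prop :=
  (∃ P : N → Finset M, inst.IsAllocation P ∧ (∃ j, P j = B) ∧
      ∀ j, inst.WPref i (P j) B) ∧
  (∀ P : N → Finset M, inst.IsAllocation P → ∃ j, inst.WPref i B (P j))

/-- The `k`-th (0-indexed) `⊳_i`-greatest good of agent `i`, if any. -/
noncomputable def kthGood (inst : LexInstance N M) (i : N) (k : ℕ) : Option M :=
  letI : LinearOrder M := inst.ord i
  (((inst.G i).sort (· ≤ ·)).reverse)[k]?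

/-- The `k`-th (0-indexed) `⊳_i`-least chore of agent `i`, if any. -/
noncomputable def kthChore (inst : LexInstance N M) (i : N) (k : ℕ) : Option M :=
  letI : LinearOrder M := inst.ord i
  ((inst.C i).sort  (· ≤ ·))[k]?

/-- Number of agents receiving their `k`-th (0-indexed) greatest good. -/
noncomputable def nPlus (inst : LexInstance N M) (A : N → Finset M) (k : ℕ) : ℕ :=
  (Finset.univ.filter fun i => (inst.kthGood i k).elim False (· ∈ A i)).card

/-- Number of agents receiving their `k`-th (0-indexed) least chore. -/
noncomputable def nMinus (inst : LexInstance N M) (A : N → Finset M) (k : ℕ) : ℕ :=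
  (Finset.univ.filter fun i => (inst.kthChore i k).elim False (· ∈ A i)).card

/-- The rank signature `(n_1^+, …, n_m^+, n_1^-, …, n_m^-)` of an allocation. -/
noncomputable def signature (inst : LexInstance N M) (A : N → Finset M) : List ℕ :=
  ((List.range (Fintype.card M)).map fun k => inst.nPlus A k) ++
    ((List.range (Fintype.card M)).map fun k => inst.nMinus A k)

/-- Rank-maximality: the signature is lexicographically maximal over allocations. -/
def RankMaximal (inst : LexInstance N M) (A : N → Finset M) : Prop :=
  inst.IsAllocation A ∧ ∀ B : N → Finset M, inst.IsAllocation B →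
    ¬ List.Lex (· < ·) (inst.signature A) (inst.signature B)

end LexInstance

/-- The set of the `k` greatest (most important) elements of `S` under `L`. -/
def topK {M : Type} [DecidableEq M] (L : LinearOrder M) (S : Finset M) (k : ℕ) :
    Finset M :=
  letI := L
  S.filter fun o => (S.filter fun o' => o < o').card < k

/-- Build a linear order on `Fin m` from an injective ranking function
(larger value = more important). -/
def mkOrd {m : ℕ} (f : Fin m → ℕ) (hf : Function.Injective f) : LinearOrder (Fin m) :=
  LinearOrder.lift' f hf

set_option linter.unusedSectionVars false
set_option linter.unusedVariables false

section Generic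
variable {M : Type} [Fintype M] [DecidableEq M] [LinearOrder M]

noncomputable def rkG (o : M) : ℕ := (Finset.univ.filter fun o' => o' < o).card

noncomputable def valG (X : Finset M) : ℕ := ∑ o ∈ X, 2 ^ rkG o

lemma rkG_lt {a b : M} (h : a < b) : rkG a < rkG b := by
  apply Finset.card_lt_card
  constructor
  · intro o ho
    simp only [Finset.mem_filter, Finset.mem_univ, true_and] at *
    exact lt_trans ho h
  · intro hsub
    have : a ∈ Finset.univ.filter fun o' => o' < b := by simp [h]
    have := hsub this
    simp at this

lemma rkG_inj {a b : M} (h : rkG a = rkG b) : a = b := by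
  rcases lt_trichotomy a b with h1 | h1 | h1
  · exact absurd h (Nat.ne_of_lt (rkG_lt h1))
  · exact h1
  · exact absurd h.symm (Nat.ne_of_lt (rkG_lt h1))

lemma valG_mono {X Y : Finset M} (h : X ⊆ Y) : valG X ≤ valG Y :=
  Finset.sum_le_sum_of_subset h

lemma valG_insert {X : Finset M} {o : M} (h : o ∉ X) :
    valG (insert o X) = 2 ^ rkG o + valG X := Finset.sum_insert h

lemma range_pow_sum (n : ℕ) : ∑ j ∈ Finset.range n, 2 ^ j < 2 ^ n := by
  induction n with
  | zero => simp
  | succ n ih => rw [Finset.sum_range_succ, pow_succ]; omega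

lemma valG_lt_pow {X : Finset M} {n : ℕ} (h : ∀ o ∈ X, rkG o < n) : valG X < 2 ^ n := by
  have hinj : ∀ x ∈ X, ∀ y ∈ X, rkG x = rkG y → x = y := fun x _ y _ hxy => rkG_inj hxy
  have h1 : valG X = ∑ j ∈ X.image rkG, 2 ^ j := (Finset.sum_image hinj).symm
  have h2 : X.image rkG ⊆ Finset.range n := by
    intro j hj
    simp only [Finset.mem_image] at hj
    obtain ⟨x, hx, rfl⟩ := hj
    exact Finset.mem_range.mpr (h x hx)
  calc valG X = ∑ j ∈ X.image rkG, 2 ^ j := h1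
    _ ≤ ∑ j ∈ Finset.range n, 2 ^ j := Finset.sum_le_sum_of_subset h2
    _ < 2 ^ n := range_pow_sum n

lemma valG_dvd {X : Finset M} {n : ℕ} (h : ∀ o ∈ X, n ≤ rkG o) : 2 ^ n ∣ valG X := by
  apply Finset.dvd_sum
  intro o ho
  exact pow_dvd_pow 2 (h o ho)

lemma valG_lt_of_witness {X Y : Finset M} {c : M} (hcY : c ∈ Y) (hcX : c ∉ X)
    (hw : ∀ o ∈ X, c < o → o ∈ Y) : valG X < valG Y := by
  classical
  have hsplit : valG X = valG (X.filter fun o => c < o) + valG (X.filter fun o => ¬ c < o) := by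
    unfold valG; rw [Finset.sum_filter_add_sum_filter_not]
  have h2 : valG (X.filter fun o => ¬ c < o) < 2 ^ rkG c := by
    apply valG_lt_pow
    intro o ho
    simp only [Finset.mem_filter] at ho
    have hne : o ≠ c := fun h => hcX (h ▸ ho.1)
    exact rkG_lt (lt_of_le_of_ne (not_lt.mp ho.2) hne)
  have hX1c : c ∉ X.filter fun o => c < o := fun h => hcX (Finset.mem_filter.mp h).1
  have hsub : insert c (X.filter fun o => c < o) ⊆ Y := by
    intro o ho
    rcases Finset.mem_insert.mp ho with rfl | h
    · exact hcY
    · exact hw o (Finset.mem_filter.mp h).1 (Finset.mem_filter.mp h).2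
  calc valG X = valG (X.filter fun o => c < o) + valG (X.filter fun o => ¬ c < o) := hsplit
    _ < valG (X.filter fun o => c < o) + 2 ^ rkG c := by omega
    _ = valG (insert c (X.filter fun o => c < o)) := by rw [valG_insert hX1c]; ring
    _ ≤ valG Y := valG_mono hsub

lemma exists_witness {X Y : Finset M} (h : X ≠ Y) :
    (∃ c, c ∈ Y ∧ c ∉ X ∧ ∀ o ∈ X, c < o → o ∈ Y) ∨
    (∃ c, c ∈ X ∧ c ∉ Y ∧ ∀ o ∈ Y, c < o → o ∈ X) := by
  have hD : ((X \ Y) ∪ (Y \ X)).Nonempty := by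
    rw [Finset.nonempty_iff_ne_empty]
    intro hE
    apply h
    rw [Finset.union_eq_empty] at hE
    exact Finset.Subset.antisymm (Finset.sdiff_eq_empty_iff_subset.mp hE.1)
      (Finset.sdiff_eq_empty_iff_subset.mp hE.2)
  set c := ((X \ Y) ∪ (Y \ X)).max' hD with hcdef
  have hc : c ∈ (X \ Y) ∪ (Y \ X) := Finset.max'_mem _ _
  have hmax : ∀ o ∈ (X \ Y) ∪ (Y \ X), o ≤ c := fun o ho => Finset.le_max' _ _ ho
  rcases Finset.mem_union.mp hc with h1 | h1
  · right
    rw [Finset.mem_sdiff] at h1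
    refine ⟨c, h1.1, h1.2, fun o ho hlt => ?_⟩
    by_contra hoX
    have : o ∈ (X \ Y) ∪ (Y \ X) := Finset.mem_union.mpr (Or.inr (Finset.mem_sdiff.mpr ⟨ho, hoX⟩))
    exact absurd (hmax o this) (not_le.mpr hlt)
  · left
    rw [Finset.mem_sdiff] at h1
    refine ⟨c, h1.1, h1.2, fun o ho hlt => ?_⟩
    by_contra hoY
    have : o ∈ (X \ Y) ∪ (Y \ X) := Finset.mem_union.mpr (Or.inl (Finset.mem_sdiff.mpr ⟨ho, hoY⟩))
    exact absurd (hmax o this) (not_le.mpr hlt)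

lemma valG_lt_iff {X Y : Finset M} :
    valG X < valG Y ↔ ∃ c, c ∈ Y ∧ c ∉ X ∧ ∀ o ∈ X, c < o → o ∈ Y := by
  constructor
  · intro hlt
    have hne : X ≠ Y := fun h => by simp [h] at hlt
    rcases exists_witness hne with h1 | ⟨c, h1, h2, h3⟩
    · exact h1
    · exact absurd (valG_lt_of_witness h1 h2 h3) (by omega)
  · rintro ⟨c, h1, h2, h3⟩
    exact valG_lt_of_witness h1 h2 h3

lemma valG_injective {X Y : Finset M} (h : valG X = valG Y) : X = Y := by
  by_contra hne
  rcases exists_witness hne with ⟨c, h1, h2, h3⟩ | ⟨c, h1, h2, h3⟩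
  · exact absurd (valG_lt_of_witness h1 h2 h3) (by omega)
  · exact absurd (valG_lt_of_witness h1 h2 h3) (by omega)

end Generic

section Layer2
variable {N M : Type} [Fintype N] [Fintype M] [DecidableEq M]

noncomputable def ival (inst : LexInstance N M) (i : N) (X : Finset M) : ℕ :=
  @valG M _ (inst.ord i) X

lemma spref_iff_val (inst : LexInstance N M) (hch : inst.ChoresOnly) (i : N) (X Y : Finset M) :
    inst.SPref i X Y ↔ ival inst i X < ival inst i Y := by
  letI := inst.ord i
  have hG : inst.G i = ∅ := hch i
  have hC : inst.C i = Finset.univ := by simp [LexInstance.C, hG]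
  show _ ↔ valG X < valG Y
  constructor
  · rintro (⟨g, hg, -⟩ | ⟨c, hc, hcw⟩)
    · rw [hG] at hg; simp at hg
    · rw [hC] at hc
      simp only [Finset.univ_inter, Finset.mem_sdiff] at hc
      refine valG_lt_of_witness hc.1 hc.2 (fun o ho hlt => ?_)
      exact hcw o (by simp [hC, ho]) hlt
  · intro hlt
    have hne : X ≠ Y := by rintro rfl; omega
    rcases exists_witness hne with ⟨c, h1, h2, h3⟩ | ⟨c, h1, h2, h3⟩
    · right
      refine ⟨c, by simp [hC, Finset.mem_sdiff, h1, h2], fun o ho hio => ?_⟩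
      simp only [hC, Finset.inter_univ] at ho
      exact h3 o ho hio
    · exact absurd (valG_lt_of_witness (X := Y) h1 h2 h3) (by omega)

lemma wpref_iff_val (inst : LexInstance N M) (hch : inst.ChoresOnly) (i : N) (X Y : Finset M) :
    inst.WPref i X Y ↔ ival inst i X ≤ ival inst i Y := by
  rw [LexInstance.WPref, spref_iff_val inst hch]
  constructor
  · rintro (h | rfl)
    · omega
    · exact le_refl _
  · intro h
    rcases eq_or_lt_of_le h with heq | hlt
    · right; exact @valG_injective M _ _ (inst.ord i) X Y heq
    · left; exact hlt

def PartOn (R : Finset M) (A : N → Finset M) : Prop :=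
  (∀ i, A i ⊆ R) ∧ (∀ o ∈ R, ∃ i, o ∈ A i) ∧ (∀ i j, i ≠ j → Disjoint (A i) (A j))

def Dom (inst : LexInstance N M) (A B : N → Finset M) : Prop :=
  (∀ i, ival inst i (B i) ≤ ival inst i (A i)) ∧ ∃ h, ival inst h (B h) < ival inst h (A h)

lemma pickOne_chores (inst : LexInstance N M) (hch : inst.ChoresOnly) (i : N)
    (R : Finset M) (h : R.Nonempty) :
    inst.pickOne i R h = @Finset.min' M (inst.ord i) R h := by
  rw [LexInstance.pickOne, dif_neg]
  rw [hch i]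
  simp

lemma pickOne_mem (inst : LexInstance N M) (i : N) (R : Finset M) (h : R.Nonempty) :
    inst.pickOne i R h ∈ R := by
  rw [LexInstance.pickOne]
  split_ifs with hg
  · exact Finset.mem_of_mem_inter_left (@Finset.max'_mem M (inst.ord i) _ hg)
  · exact @Finset.min'_mem M (inst.ord i) R h

lemma runPick_subset (inst : LexInstance N M) :
    ∀ (s : List N) (R : Finset M) (j : N), inst.runPick s R j ⊆ R
  | [], R, j => by rw [LexInstance.runPick]; exact Finset.empty_subset R
  | i :: rest, R, j => by
    rw [LexInstance.runPick]
    split_ifs with h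
    · intro o ho
      rcases Finset.mem_union.mp ho with h1 | h1
      · exact Finset.erase_subset _ _ (runPick_subset inst rest _ j h1)
      · have : o = inst.pickOne i R h := by
          by_cases hj : j = i
          · simp [hj] at h1; exact h1
          · simp [hj] at h1
        exact this ▸ pickOne_mem inst i R h
    · exact Finset.empty_subset R

end Layer2

section Layer3
variable {N M : Type} [Fintype N] [Fintype M] [DecidableEq M]

lemma nat_le_of_dvd_lt {d x y : ℕ} (hx : d ∣ x) (hy : d ∣ y) (h : x < y + d) : x ≤ y := by
  by_contra hc
  push_neg at hc
  have h1 : d ∣ x - y := Nat.dvd_sub hx hy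
  have h2 : 0 < x - y := by omega
  have := Nat.le_of_dvd h2 h1
  omega

lemma ival_insert (inst : LexInstance N M) (k : N) {X : Finset M} {o : M} (h : o ∉ X) :
    ival inst k (insert o X) = 2 ^ (@rkG M _ (inst.ord k) o) + ival inst k X :=
  @valG_insert M _ _ (inst.ord k) X o h

lemma ival_erase_add (inst : LexInstance N M) (k : N) {X : Finset M} {o : M} (h : o ∈ X) :
    ival inst k X = 2 ^ (@rkG M _ (inst.ord k) o) + ival inst k (X.erase o) := by
  conv_lhs => rw [← Finset.insert_erase h]
  exact ival_insert inst k (Finset.notMem_erase o X)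

lemma ival_dvd (inst : LexInstance N M) (k : N) {X : Finset M} {n : ℕ}
    (h : ∀ x ∈ X, n ≤ @rkG M _ (inst.ord k) x) : 2 ^ n ∣ ival inst k X :=
  @valG_dvd M _ _ (inst.ord k) X n h

lemma min_rk_lt (inst : LexInstance N M) (hch : inst.ChoresOnly) (i : N) {R : Finset M}
    (hR : R.Nonempty) {b : M} (hb : b ∈ R) (hne : b ≠ inst.pickOne i R hR) :
    @rkG M _ (inst.ord i) (inst.pickOne i R hR) < @rkG M _ (inst.ord i) b := by
  letI := inst.ord i
  rw [pickOne_chores inst hch] at hne ⊢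
  exact @rkG_lt M _ _ (inst.ord i) _ _
    (lt_of_le_of_ne (Finset.min'_le R b hb) (Ne.symm hne))

lemma runPick_noDom (inst : LexInstance N M) (hch : inst.ChoresOnly) :
    ∀ (s : List N) (R : Finset M), s.length = R.card →
    ∀ B, PartOn R B → ¬ Dom inst (inst.runPick s R) B := by
  intro s
  induction s with
  | nil =>
    intro R hlen B hB hD
    have hR : R = ∅ := Finset.card_eq_zero.mp hlen.symm
    obtain ⟨hle, h0, hlt⟩ := hD
    have hB0 : B h0 = ∅ := Finset.subset_empty.mp (hR ▸ hB.1 h0)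
    rw [LexInstance.runPick] at hlt
    rw [hB0] at hlt
    exact absurd hlt (lt_irrefl _)
  | cons i rest ih =>
    intro R hlen B hB hD
    simp only [List.length_cons] at hlen
    have hR : R.Nonempty := Finset.card_pos.mp (by omega)
    rw [LexInstance.runPick, dif_pos hR] at hD
    set o := inst.pickOne i R hR with ho_def
    set A' := inst.runPick rest (R.erase o) with hA'_def
    have hoR : o ∈ R := pickOne_mem inst i R hR
    have hA'sub : ∀ j, A' j ⊆ R.erase o := fun j => runPick_subset inst rest _ j
    have hoA' : ∀ j, o ∉ A' j := fun j h => (Finset.mem_erase.mp (hA'sub j h)).1 rfl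
    obtain ⟨hle, h0, hlt⟩ := hD
    have hle' : ∀ k, ival inst k (B k) ≤ ival inst k (A' k ∪ if k = i then {o} else ∅) := hle
    have hlt' : ival inst h0 (B h0) < ival inst h0 (A' h0 ∪ if h0 = i then {o} else ∅) := hlt
    clear hle hlt
    have hfun_i : A' i ∪ (if i = i then {o} else ∅) = insert o (A' i) := by
      rw [if_pos rfl, Finset.union_comm, ← Finset.insert_eq]
    have hfun_ne : ∀ j, j ≠ i → A' j ∪ (if j = i then {o} else ∅) = A' j := by
      intro j hj; rw [if_neg hj, Finset.union_empty]
    -- owner of o in B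
    obtain ⟨j0, hj0⟩ := hB.2.1 o hoR
    have hoB : ∀ k, k ≠ j0 → o ∉ B k := fun k hk h =>
      Finset.disjoint_left.mp (hB.2.2 k j0 hk) h hj0
    set B' : N → Finset M := fun k => if k = j0 then (B j0).erase o else B k with hB'_def
    have hB'j0 : B' j0 = (B j0).erase o := by simp [hB'_def]
    have hB'ne : ∀ k, k ≠ j0 → B' k = B k := by intro k hk; simp [hB'_def, hk]
    have hB'Part : PartOn (R.erase o) B' := by
      refine ⟨?_, ?_, ?_⟩
      · intro k
        by_cases hk : k = j0
        · subst hk; rw [hB'j0]; exact Finset.erase_subset_erase o (hB.1 k)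
        · rw [hB'ne k hk]
          exact Finset.subset_erase.mpr ⟨hB.1 k, hoB k hk⟩
      · intro x hx
        obtain ⟨hxo, hxR⟩ := Finset.mem_erase.mp hx
        obtain ⟨k, hk⟩ := hB.2.1 x hxR
        refine ⟨k, ?_⟩
        by_cases hkj : k = j0
        · subst hkj; rw [hB'j0]; exact Finset.mem_erase.mpr ⟨hxo, hk⟩
        · rw [hB'ne k hkj]; exact hk
      · intro k l hkl
        have h1 : B' k ⊆ B k := by
          by_cases hk : k = j0
          · subst hk; rw [hB'j0]; exact Finset.erase_subset _ _
          · rw [hB'ne k hk]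
        have h2 : B' l ⊆ B l := by
          by_cases hl : l = j0
          · subst hl; rw [hB'j0]; exact Finset.erase_subset _ _
          · rw [hB'ne l hl]
        exact Finset.disjoint_of_subset_left h1 (Finset.disjoint_of_subset_right h2 (hB.2.2 k l hkl))
    -- key value facts
    have hBiA : ival inst i (B i) ≤ 2 ^ (@rkG M _ (inst.ord i) o) + ival inst i (A' i) := by
      have := hle' i
      rwa [hfun_i, ival_insert inst i (hoA' i)] at this
    have hweak : ∀ k, ival inst k (B' k) ≤ ival inst k (A' k) := by
      intro k
      by_cases hk : k = j0
      · subst hk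
        by_cases hj : k = i
        · rw [hB'j0]
          have he := ival_erase_add inst k hj0
          have h1 := hle' k
          rw [if_pos hj, Finset.union_comm, ← Finset.insert_eq,
            ival_insert inst k (hoA' k)] at h1
          rw [he] at h1
          omega
        · rw [hB'j0]
          have he := ival_erase_add inst k hj0
          have h1 := hle' k
          rw [hfun_ne k hj] at h1
          have hp : 0 < 2 ^ (@rkG M _ (inst.ord k) o) := Nat.pow_pos (by norm_num)
          omega
      · rw [hB'ne k hk]
        by_cases hki : k = i
        · subst hki
          have hdB : 2 ^ ((@rkG M _ (inst.ord k) o) + 1) ∣ ival inst k (B k) := by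
            apply ival_dvd
            intro x hx
            have hxR : x ∈ R := hB.1 k hx
            have hxo : x ≠ o := fun h => hoB k hk (h ▸ hx)
            exact min_rk_lt inst hch k hR hxR hxo
          have hdA : 2 ^ ((@rkG M _ (inst.ord k) o) + 1) ∣ ival inst k (A' k) := by
            apply ival_dvd
            intro x hx
            obtain ⟨hxo, hxR⟩ := Finset.mem_erase.mp (hA'sub k hx)
            exact min_rk_lt inst hch k hR hxR hxo
          refine nat_le_of_dvd_lt hdB hdA ?_
          have : (2:ℕ) ^ ((@rkG M _ (inst.ord k) o) + 1) = 2 * 2 ^ (@rkG M _ (inst.ord k) o) := by ring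
          have hp : 0 < 2 ^ (@rkG M _ (inst.ord k) o) := Nat.pow_pos (by norm_num)
          omega
        · have h1 := hle' k
          rw [hfun_ne k hki] at h1
          exact h1
    have hstrict : ∃ h, ival inst h (B' h) < ival inst h (A' h) := by
      by_cases hj : j0 = i
      · subst hj
        by_cases h0j : h0 = j0
        · subst h0j
          refine ⟨h0, ?_⟩
          rw [hB'j0]
          rw [hfun_i, ival_insert inst h0 (hoA' h0)] at hlt'
          have he := ival_erase_add inst h0 hj0
          have hp : 0 < 2 ^ (@rkG M _ (inst.ord h0) o) := Nat.pow_pos (by norm_num)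
          omega
        · refine ⟨h0, ?_⟩
          rw [hB'ne h0 h0j, ← hfun_ne h0 h0j]
          exact hlt'
      · refine ⟨j0, ?_⟩
        rw [hB'j0]
        have he := ival_erase_add inst j0 hj0
        have h1 := hle' j0
        rw [hfun_ne j0 hj] at h1
        have hp : 0 < 2 ^ (@rkG M _ (inst.ord j0) o) := Nat.pow_pos (by norm_num)
        omega
    exact ih (R.erase o) (by rw [Finset.card_erase_of_mem hoR]; omega) B' hB'Part ⟨hweak, hstrict⟩

end Layer3

section Layer4
variable {N M : Type} [Fintype N] [Fintype M] [DecidableEq M]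

lemma exists_min_owner (inst : LexInstance N M) (hch : inst.ChoresOnly) {R : Finset M}
    (hR : R.Nonempty) {A : N → Finset M} (hA : PartOn R A)
    (hnd : ∀ B, PartOn R B → ¬ Dom inst A B) :
    ∃ i, @Finset.min' M (inst.ord i) R hR ∈ A i := by
  by_contra hcon
  push_neg at hcon
  obtain ⟨o0, ho0⟩ := hR.exists_mem
  obtain ⟨i0, hi0⟩ := hA.2.1 o0 ho0
  set w : M → N := fun o => if h : o ∈ R then (hA.2.1 o h).choose else i0 with hw_def
  have hwA : ∀ o ∈ R, o ∈ A (w o) := by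
    intro o h
    simp only [hw_def, dif_pos h]
    exact (hA.2.1 o h).choose_spec
  have hwu : ∀ o j, o ∈ A j → w o = j := by
    intro o j hj
    have hoR : o ∈ R := hA.1 j hj
    by_contra hne
    exact Finset.disjoint_left.mp (hA.2.2 (w o) j hne) (hwA o hoR) hj
  set f : M → M := fun o => @Finset.min' M (inst.ord (w o)) R hR with hf_def
  have hfR : ∀ o, f o ∈ R := fun o => @Finset.min'_mem M (inst.ord (w o)) R hR
  have hfnA : ∀ o, f o ∉ A (w o) := fun o => hcon (w o)
  have hfne : ∀ o ∈ R, f o ≠ o := by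
    intro o ho h
    apply hfnA o
    rw [h]
    exact hwA o ho
  have hitR : ∀ (x : M), x ∈ R → ∀ k, f^[k] x ∈ R := by
    intro x hx k
    induction k with
    | zero => exact hx
    | succ n ihn => rw [Function.iterate_succ_apply']; exact hfR _
  -- find a repeat
  obtain ⟨a, ha, b, hb, hab, habe⟩ :=
    Finset.exists_ne_map_eq_of_card_lt_of_maps_to
      (s := Finset.range (R.card + 1)) (t := R)
      (by rw [Finset.card_range]; omega)
      (fun k _ => hitR o0 ho0 k)
  -- wlog a < b
  obtain ⟨a, b, hlt, habe⟩ : ∃ a b : ℕ, a < b ∧ (f^[a] o0 = f^[b] o0) := by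
    rcases lt_or_gt_of_ne hab with h | h
    · exact ⟨a, b, h, habe⟩
    · exact ⟨b, a, h, habe.symm⟩
  set z := f^[a] o0 with hz_def
  have hzR : z ∈ R := hitR o0 ho0 a
  have hper0 : 0 < b - a ∧ f^[b - a] z = z := by
    constructor
    · omega
    · rw [hz_def, ← Function.iterate_add_apply, Nat.sub_add_cancel (le_of_lt hlt)]
      exact habe.symm
  set P : ℕ → Prop := fun p => 0 < p ∧ f^[p] z = z with hP_def
  have hPex : ∃ p, P p := ⟨b - a, hper0⟩
  set L := Nat.find hPex with hL_def
  have hL : 0 < L ∧ f^[L] z = z := Nat.find_spec hPex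
  have hLmin : ∀ p, p < L → ¬ P p := fun p hp => Nat.find_min hPex hp
  set c : ℕ → M := fun k => f^[k] z with hc_def
  have hcR : ∀ k, c k ∈ R := fun k => hitR z hzR k
  have hcL : c L = c 0 := hL.2
  have hinj_aux : ∀ k l, k < l → l < L → c k = c l → False := by
    intro k l hkl hl he
    have h1 : c ((L - l) + k) = c ((L - l) + l) := by
      simp only [hc_def]
      rw [Function.iterate_add_apply, Function.iterate_add_apply]
      exact congrArg _ he
    have h2 : (L - l) + l = L := by omega
    rw [h2] at h1
    have h3 : c ((L - l) + k) = z := by rw [h1]; exact hL.2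
    exact hLmin ((L - l) + k) (by omega) ⟨by omega, h3⟩
  have hinj : ∀ k l, k < L → l < L → c k = c l → k = l := by
    intro k l hk hl he
    rcases lt_trichotomy k l with h | h | h
    · exact absurd (hinj_aux k l h hl he) not_false
    · exact h
    · exact absurd (hinj_aux l k h hk he.symm) not_false
  have hL2 : 2 ≤ L := by
    rcases Nat.lt_or_ge L 2 with h | h
    · interval_cases L
      · omega
      · exfalso
        have := hL.2
        rw [Function.iterate_one] at this
        exact hfne z hzR this
    · exact h
  set nx : ℕ → ℕ := fun k => (k + 1) % L with hnx_def
  have hnxlt : ∀ k, nx k < L := fun k => Nat.mod_lt _ (by omega)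
  have hnxeq : ∀ k, k < L → nx k = if k + 1 = L then 0 else k + 1 := by
    intro k hk
    simp only [hnx_def]
    split_ifs with h
    · rw [h, Nat.mod_self]
    · exact Nat.mod_eq_of_lt (by omega)
  have hnxf : ∀ k, k < L → c (nx k) = f (c k) := by
    intro k hk
    rw [hnxeq k hk]
    split_ifs with h
    · rw [← hcL, ← h]
      exact Function.iterate_succ_apply' f k z
    · exact Function.iterate_succ_apply' f k z
  have hnxinj : ∀ k l, k < L → l < L → nx k = nx l → k = l := by
    intro k l hk hl he
    rw [hnxeq k hk, hnxeq l hl] at he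
    split_ifs at he <;> omega
  have hod : ∀ k l, k < L → l < L → w (c k) = w (c l) → k = l := by
    intro k l hk hl he
    have h1 : f (c k) = f (c l) := by
      simp only [hf_def]
      rw [he]
    have h2 : c (nx k) = c (nx l) := by rw [hnxf k hk, hnxf l hl, h1]
    exact hnxinj k l hk hl (hinj _ _ (hnxlt k) (hnxlt l) h2)
  have hsurj : ∀ k, k < L → ∃ l, l < L ∧ nx l = k := by
    intro k hk
    by_cases h0 : k = 0
    · refine ⟨L - 1, by omega, ?_⟩
      simp only [hnx_def]
      rw [Nat.sub_add_cancel (by omega), Nat.mod_self, h0]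
    · refine ⟨k - 1, by omega, ?_⟩
      simp only [hnx_def]
      rw [Nat.sub_add_cancel (by omega)]
      exact Nat.mod_eq_of_lt hk
  set K : Finset M := (Finset.range L).image c with hK_def
  have hKmem : ∀ o ∈ K, ∃ k, k < L ∧ c k = o := by
    intro o ho
    obtain ⟨k, hk, he⟩ := Finset.mem_image.mp ho
    exact ⟨k, Finset.mem_range.mp hk, he⟩
  have hKc : ∀ k, k < L → c k ∈ K := fun k hk =>
    Finset.mem_image.mpr ⟨k, Finset.mem_range.mpr hk, rfl⟩
  set g : M → N := fun o =>
    if h : ∃ k, k < L ∧ c (nx k) = o then w (c (Classical.choose h)) else w o with hg_def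
  have hgspec : ∀ k, k < L → g (c (nx k)) = w (c k) := by
    intro k hk
    have hex : ∃ k', k' < L ∧ c (nx k') = c (nx k) := ⟨k, hk, rfl⟩
    simp only [hg_def, dif_pos hex]
    have hspec := Classical.choose_spec hex
    have h1 : nx (Classical.choose hex) = nx k :=
      hinj _ _ (hnxlt _) (hnxlt _) hspec.2
    have h2 : Classical.choose hex = k := hnxinj _ _ hspec.1 hk h1
    rw [h2]
  have hgout : ∀ o, o ∉ K → g o = w o := by
    intro o hK
    simp only [hg_def]
    rw [dif_neg]
    rintro ⟨k, hk, he⟩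
    exact hK (he ▸ hKc (nx k) (hnxlt k))
  set B : N → Finset M := fun j => R.filter (fun o => g o = j) with hB_def
  have hBpart : PartOn R B := by
    refine ⟨fun j => Finset.filter_subset _ _, ?_, ?_⟩
    · intro o ho
      exact ⟨g o, Finset.mem_filter.mpr ⟨ho, rfl⟩⟩
    · intro j l hjl
      rw [Finset.disjoint_left]
      intro o h1 h2
      rw [hB_def] at h1 h2
      exact hjl ((Finset.mem_filter.mp h1).2.symm.trans (Finset.mem_filter.mp h2).2)
  -- characterizations
  have hkeyA : ∀ j, (∀ k, k < L → w (c k) ≠ j) → B j = A j := by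
    intro j hj
    ext o
    simp only [hB_def, Finset.mem_filter]
    constructor
    · rintro ⟨hoR', hgo⟩
      by_cases hK : o ∈ K
      · obtain ⟨k, hk, hck⟩ := hKmem o hK
        obtain ⟨l, hl, hnl⟩ := hsurj k hk
        have : g o = w (c l) := by rw [← hck, ← hnl]; exact hgspec l hl
        exact absurd (this ▸ hgo) (hj l hl)
      · rw [hgout o hK] at hgo
        exact hgo ▸ hwA o hoR'
    · intro hoA
      have hoR' : o ∈ R := hA.1 j hoA
      have hwo : w o = j := hwu o j hoA
      by_cases hK : o ∈ K
      · obtain ⟨k, hk, hck⟩ := hKmem o hK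
        exact absurd (hck ▸ hwo) (hj k hk)
      · exact ⟨hoR', (hgout o hK).trans hwo⟩
  have hkeyC : ∀ k0, k0 < L →
      B (w (c k0)) = insert (c (nx k0)) ((A (w (c k0))).erase (c k0)) := by
    intro k0 hk0
    ext o
    simp only [hB_def, Finset.mem_filter, Finset.mem_insert, Finset.mem_erase]
    constructor
    · rintro ⟨hoR', hgo⟩
      by_cases hK : o ∈ K
      · obtain ⟨k, hk, hck⟩ := hKmem o hK
        obtain ⟨l, hl, hnl⟩ := hsurj k hk
        have h1 : g o = w (c l) := by rw [← hck, ← hnl]; exact hgspec l hl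
        have h2 : l = k0 := hod l k0 hl hk0 (h1 ▸ hgo)
        left
        rw [← hck, ← hnl, h2]
      · rw [hgout o hK] at hgo
        right
        refine ⟨fun h => hK (h ▸ hKc k0 hk0), hgo ▸ hwA o hoR'⟩
    · rintro (rfl | ⟨hne, hoA⟩)
      · exact ⟨hcR (nx k0), hgspec k0 hk0⟩
      · have hoR' : o ∈ R := hA.1 _ hoA
        have hwo : w o = w (c k0) := hwu o _ hoA
        refine ⟨hoR', ?_⟩
        by_cases hK : o ∈ K
        · obtain ⟨k, hk, hck⟩ := hKmem o hK
          have : k = k0 := hod k k0 hk hk0 (hck ▸ hwo)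
          exact absurd (this ▸ hck.symm) hne
        · exact (hgout o hK).trans hwo
  have hltC : ∀ k0, k0 < L →
      ival inst (w (c k0)) (B (w (c k0))) < ival inst (w (c k0)) (A (w (c k0))) := by
    intro k0 hk0
    set j := w (c k0) with hj_def
    have hck0A : c k0 ∈ A j := hwA (c k0) (hcR k0)
    have hm_min : c (nx k0) = @Finset.min' M (inst.ord j) R hR := hnxf k0 hk0
    have hmnA : c (nx k0) ∉ A j := hm_min ▸ hcon j
    have hmne : c (nx k0) ≠ c k0 := fun h => hmnA (h ▸ hck0A)
    have hmerase : c (nx k0) ∉ (A j).erase (c k0) :=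
      fun h => hmnA (Finset.mem_of_mem_erase h)
    rw [hkeyC k0 hk0, ival_insert inst j hmerase, ival_erase_add inst j hck0A]
    have hrk : @rkG M _ (inst.ord j) (c (nx k0)) < @rkG M _ (inst.ord j) (c k0) := by
      letI := inst.ord j
      refine @rkG_lt M _ _ (inst.ord j) _ _ ?_
      rw [hm_min]
      exact lt_of_le_of_ne (Finset.min'_le R _ (hcR k0)) (hm_min ▸ hmne)
    have hpow : (2:ℕ) ^ (@rkG M _ (inst.ord j) (c (nx k0))) <
        2 ^ (@rkG M _ (inst.ord j) (c k0)) :=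
      Nat.pow_lt_pow_right (by norm_num) hrk
    omega
  -- assemble domination
  refine hnd B hBpart ⟨?_, ?_⟩
  · intro j
    by_cases hj : ∃ k, k < L ∧ w (c k) = j
    · obtain ⟨k0, hk0, rfl⟩ := hj
      exact le_of_lt (hltC k0 hk0)
    · push_neg at hj
      rw [hkeyA j hj]
  · exact ⟨w (c 0), hltC 0 (by omega)⟩

end Layer4

section Layer5
variable {N M : Type} [Fintype N] [Fintype M] [DecidableEq M]

lemma valPO_seq (inst : LexInstance N M) (hch : inst.ChoresOnly) :
    ∀ (n : ℕ) (R : Finset M) (A : N → Finset M), R.card = n →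
    PartOn R A → (∀ B, PartOn R B → ¬ Dom inst A B) →
    ∃ s : List N, s.length = n ∧ inst.runPick s R = A := by
  intro n
  induction n with
  | zero =>
    intro R A hcard hA _
    have hRe : R = ∅ := Finset.card_eq_zero.mp hcard
    refine ⟨[], rfl, funext fun j => ?_⟩
    rw [LexInstance.runPick]
    exact (Finset.subset_empty.mp (hRe ▸ hA.1 j)).symm
  | succ n ih =>
    intro R A hcard hA hnd
    have hR : R.Nonempty := Finset.card_pos.mp (by omega)
    obtain ⟨i, hi⟩ := exists_min_owner inst hch hR hA hnd
    set o := @Finset.min' M (inst.ord i) R hR with ho_def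
    have hoR : o ∈ R := @Finset.min'_mem M (inst.ord i) R hR
    have hoAj : ∀ j, j ≠ i → o ∉ A j := fun j hj h =>
      Finset.disjoint_left.mp (hA.2.2 j i hj) h hi
    set A' : N → Finset M := fun j => (A j).erase o with hA'_def
    have hA'i : A i = insert o (A' i) := by
      simp only [hA'_def]
      rw [Finset.insert_erase hi]
    have hA'j : ∀ j, j ≠ i → A' j = A j := by
      intro j hj
      simp only [hA'_def]
      exact Finset.erase_eq_of_notMem (hoAj j hj)
    have hoA' : ∀ j, o ∉ A' j := fun j => Finset.notMem_erase o (A j)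
    have hA'part : PartOn (R.erase o) A' := by
      refine ⟨fun j => Finset.erase_subset_erase o (hA.1 j), ?_, ?_⟩
      · intro x hx
        obtain ⟨hxo, hxR⟩ := Finset.mem_erase.mp hx
        obtain ⟨j, hj⟩ := hA.2.1 x hxR
        exact ⟨j, Finset.mem_erase.mpr ⟨hxo, hj⟩⟩
      · intro j l hjl
        exact Finset.disjoint_of_subset_left (Finset.erase_subset _ _)
          (Finset.disjoint_of_subset_right (Finset.erase_subset _ _) (hA.2.2 j l hjl))
    have hA'nd : ∀ B', PartOn (R.erase o) B' → ¬ Dom inst A' B' := by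
      intro B' hB' hD
      set B : N → Finset M := fun j => if j = i then insert o (B' i) else B' j with hB_def
      have hBi : B i = insert o (B' i) := by simp [hB_def]
      have hBj : ∀ j, j ≠ i → B j = B' j := by intro j hj; simp [hB_def, hj]
      have hoB' : ∀ j, o ∉ B' j := fun j h => (Finset.mem_erase.mp (hB'.1 j h)).1 rfl
      have hBpart : PartOn R B := by
        refine ⟨?_, ?_, ?_⟩
        · intro j
          by_cases hj : j = i
          · subst hj
            rw [hBi]
            exact Finset.insert_subset hoR ((hB'.1 j).trans (Finset.erase_subset _ _))
          · rw [hBj j hj]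
            exact (hB'.1 j).trans (Finset.erase_subset _ _)
        · intro x hx
          by_cases hxo : x = o
          · exact ⟨i, by rw [hBi]; exact Finset.mem_insert.mpr (Or.inl hxo)⟩
          · obtain ⟨j, hj⟩ := hB'.2.1 x (Finset.mem_erase.mpr ⟨hxo, hx⟩)
            refine ⟨j, ?_⟩
            by_cases hji : j = i
            · subst hji; rw [hBi]; exact Finset.mem_insert_of_mem hj
            · rw [hBj j hji]; exact hj
        · intro j l hjl
          have key : ∀ m, B m ⊆ insert o (B' m) := by
            intro m
            by_cases hm : m = i
            · subst hm; rw [hBi]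
            · rw [hBj m hm]; exact Finset.subset_insert _ _
          by_cases hj : j = i
          · subst hj
            rw [hBi, hBj l (Ne.symm hjl)]
            rw [Finset.disjoint_insert_left]
            exact ⟨hoB' l, hB'.2.2 j l hjl⟩
          · by_cases hl : l = i
            · subst hl
              rw [hBi, hBj j hj]
              rw [Finset.disjoint_insert_right]
              exact ⟨hoB' j, hB'.2.2 j l hjl⟩
            · rw [hBj j hj, hBj l hl]
              exact hB'.2.2 j l hjl
      apply hnd B hBpart
      obtain ⟨hle, h0, hlt⟩ := hD
      constructor
      · intro j
        by_cases hj : j = i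
        · subst hj
          rw [hBi, hA'i, ival_insert inst j (hoB' j), ival_insert inst j (hoA' j)]
          have := hle j
          omega
        · rw [hBj j hj, ← hA'j j hj]
          exact hle j
      · refine ⟨h0, ?_⟩
        by_cases hj : h0 = i
        · subst hj
          rw [hBi, hA'i, ival_insert inst h0 (hoB' h0), ival_insert inst h0 (hoA' h0)]
          omega
        · rw [hBj h0 hj, ← hA'j h0 hj]
          exact hlt
    obtain ⟨s, hs, hrun⟩ := ih (R.erase o) A'
      (by rw [Finset.card_erase_of_mem hoR]; omega) hA'part hA'nd
    refine ⟨i :: s, by simp [hs], ?_⟩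
    rw [LexInstance.runPick, dif_pos hR]
    have hpick : inst.pickOne i R hR = o := pickOne_chores inst hch i R hR
    funext j
    rw [hpick, hrun]
    by_cases hj : j = i
    · subst hj
      rw [if_pos rfl, Finset.union_comm, ← Finset.insert_eq, ← hA'i]
    · rw [if_neg hj, Finset.union_empty]
      exact hA'j j hj

end Layer5

/-- In a chores-only lexicographic instance, a complete allocation
is Pareto optimal if and only if it is sequencible. -/
theorem po_iff_sequencible_chores
    {N M : Type} [Fintype N] [Fintype M] [DecidableEq M]
    (inst : LexInstance N M) (hch : inst.ChoresOnly)
    (A : N → Finset M) (hA : inst.IsAllocation A) :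
    inst.ParetoOptimal A ↔ inst.Sequencible A := by
  have hPart : PartOn Finset.univ A :=
    ⟨fun i => Finset.subset_univ _, fun o _ => hA.2 o, hA.1⟩
  constructor
  · intro hpo
    have hnd : ∀ B, PartOn Finset.univ B → ¬ Dom inst A B := by
      intro B hB hD
      apply hpo
      refine ⟨B, ⟨hB.2.2, fun o => hB.2.1 o (Finset.mem_univ o)⟩, ?_, ?_⟩
      · intro i
        rw [wpref_iff_val inst hch]
        exact hD.1 i
      · obtain ⟨h, hlt⟩ := hD.2
        exact ⟨h, (spref_iff_val inst hch h _ _).mpr hlt⟩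
    obtain ⟨s, hs, hrun⟩ := valPO_seq inst hch (Fintype.card M) Finset.univ A
      Finset.card_univ hPart hnd
    exact ⟨s, hs, hrun⟩
  · rintro ⟨s, hs, hrun⟩ ⟨B, hB, hw, h, hst⟩
    have hBP : PartOn Finset.univ B :=
      ⟨fun i => Finset.subset_univ _, fun o _ => hB.2 o, hB.1⟩
    apply runPick_noDom inst hch s Finset.univ (by rw [hs, Finset.card_univ]) B hBP
    rw [hrun]
    refine ⟨fun i => (wpref_iff_val inst hch i _ _).mp (hw i),
      ⟨h, (spref_iff_val inst hch h _ _).mp hst⟩⟩
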